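/- For ultrafilters 𝒰₁ and 𝒰₂ on ℕ, the tensor product 𝒰₁ ⊗ 𝒰₂ equals the product filter ℱ(𝒰₁ × 𝒰₂) if and only if at least one of 𝒰₁, 𝒰₂ is a principal ultrafilter. -/

import Mathlib

/-- For ultrafilters on `ℕ`, the tensor product equals the product filter iff
at least one of the ultrafilters is principal. -/
theorem stmt_3 (𝒰₁ 𝒰₂ : Ultrafilter ℕ) :
    (∀ A : Set (ℕ × ℕ),
        {n : ℕ | {m : ℕ | (n, m) ∈ A} ∈ 𝒰₂} ∈ 𝒰₁ ↔
          ∃ A₁ ∈ 𝒰₁, ∃ A₂ ∈ 𝒰₂, A₁ ×ˢ A₂ ⊆ A) ↔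
      ((∃ n : ℕ, 𝒰₁ = pure n) ∨ (∃ n : ℕ, 𝒰₂ = pure n)) := by
  constructor
  · intro h
    by_contra hc
    push_neg at hc
    obtain ⟨h1, h2⟩ := hc
    -- A = {(n,m) : n < m} is in the tensor product
    have hA := (h {p : ℕ × ℕ | p.1 < p.2}).mp ?_
    · obtain ⟨A₁, hA₁, A₂, hA₂, hsub⟩ := hA
      -- A₂ nonempty
      obtain ⟨m, hm⟩ := (𝒰₂ : Filter ℕ).nonempty_of_mem hA₂
      -- A₁ infinite
      have hinf : A₁.Infinite := by
        intro hfin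
        obtain ⟨a, ha⟩ := Ultrafilter.eq_pure_of_finite_mem hfin hA₁
        exact h1 a ha.2
      obtain ⟨n, hn, hmn⟩ := hinf.exists_gt m
      have := hsub (show (n, m) ∈ A₁ ×ˢ A₂ from ⟨hn, hm⟩)
      simp only [Set.mem_setOf_eq] at this
      omega
    · -- for each n, {m : n < m} is cofinite, hence in 𝒰₂
      have : ∀ n : ℕ, {m : ℕ | n < m} ∈ 𝒰₂ := by
        intro n
        rw [← Ultrafilter.compl_notMem_iff]
        intro hmem
        have hfin : {m : ℕ | n < m}ᶜ.Finite := by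
          have : {m : ℕ | n < m}ᶜ ⊆ Set.Iic n := by
            intro x hx
            simpa using hx
          exact (Set.finite_Iic n).subset this
        obtain ⟨a, ha⟩ := Ultrafilter.eq_pure_of_finite_mem hfin hmem
        exact h2 a ha.2
      simpa using Ultrafilter.mem_coe.mp (Filter.univ_mem' (f := (𝒰₁ : Filter ℕ)) (s := {n : ℕ | {m : ℕ | n < m} ∈ 𝒰₂}) (fun n => this n))
  · rintro (⟨n, rfl⟩ | ⟨m, rfl⟩) <;> intro A
    · simp only [Ultrafilter.mem_pure, Set.mem_setOf_eq]
      constructor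
      · intro hA
        exact ⟨{n}, rfl, {m | (n, m) ∈ A}, hA, by
          rintro ⟨a, b⟩ ⟨ha, hb⟩
          simp only [Set.mem_singleton_iff] at ha
          subst ha; exact hb⟩
      · rintro ⟨A₁, hA₁, A₂, hA₂, hsub⟩
        exact 𝒰₂.toFilter.mem_of_superset hA₂ fun b hb => hsub ⟨hA₁, hb⟩
    · simp only [Ultrafilter.mem_pure, Set.mem_setOf_eq]
      constructor
      · intro hA
        exact ⟨{n | (n, m) ∈ A}, hA, {m}, rfl, by
          rintro ⟨a, b⟩ ⟨ha, hb⟩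
          simp only [Set.mem_singleton_iff] at hb
          subst hb; exact ha⟩
      · rintro ⟨A₁, hA₁, A₂, hA₂, hsub⟩
        exact 𝒰₁.toFilter.mem_of_superset hA₁ fun a ha => hsub ⟨ha, hA₂⟩
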